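/- Let η be a probability measure on [0,1), and for n, m ∈ ℕ let P_n^η be the distribution of a random component η_{x,i} (i uniform in {0,…,n}, x ∼ η), and Q_{n,m}^η the distribution obtained by first choosing η_{x,i} as above and then choosing a component of it at a level j uniform in {i,…,i+m}. Then the total variation distance satisfies ‖P_n^η − Q_{n,m}^η‖ = O(m/n). -/

import Mathlib

open MeasureTheory

/-- The level-`i` dyadic cell `[k/2^i, (k+1)/2^i)`. -/
noncomputable def dcell (i k : ℕ) : Set ℝ :=
  Set.Ico ((k : ℝ) / 2 ^ i) (((k : ℝ) + 1) / 2 ^ i)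

/-- `P_n^η`: the distribution of the random component `η_{x,i}` (identified with the
pair (level `i`, dyadic cell index)), where `i` is uniform in `{0,…,n}` and `x ∼ η`. -/
noncomputable def compDist (η : Measure ℝ) (n : ℕ) : ℕ × ℕ → ℝ :=
  fun p => if p.1 ≤ n then ((n : ℝ) + 1)⁻¹ * (η (dcell p.1 p.2)).toReal else 0

/-- `Q_{n,m}^η`: the distribution of a component of a random component: first `i` uniform
in `{0,…,n}` and `x ∼ η`, then a component of `η_{x,i}` at level `j` uniform in
`{i,…,i+m}`; the result is the component of `η` at level `j` containing `x`. -/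
noncomputable def compCompDist (η : Measure ℝ) (n m : ℕ) : ℕ × ℕ → ℝ :=
  fun p => (((Finset.Icc (p.1 - m) (min p.1 n)).card : ℝ) / (((n : ℝ) + 1) * ((m : ℝ) + 1)))
    * (η (dcell p.1 p.2)).toReal

/-- The level-dependent coefficient in the pointwise difference. -/
noncomputable def gAux (n m i : ℕ) : ℝ :=
  |(if i ≤ n then ((n : ℝ) + 1)⁻¹ else 0) -
    ((Finset.Icc (i - m) (min i n)).card : ℝ) / (((n : ℝ) + 1) * ((m : ℝ) + 1))|

lemma gAux_nonneg (n m i : ℕ) : 0 ≤ gAux n m i := abs_nonneg _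

lemma gAux_le (n m i : ℕ) : gAux n m i ≤ ((n : ℝ) + 1)⁻¹ := by
  have hn1 : (0:ℝ) < (n:ℝ) + 1 := by positivity
  have hm1 : (0:ℝ) < (m:ℝ) + 1 := by positivity
  have hcardN : (Finset.Icc (i - m) (min i n)).card ≤ m + 1 := by
    rw [Nat.card_Icc]; omega
  have hcard : ((Finset.Icc (i - m) (min i n)).card : ℝ) ≤ (m:ℝ) + 1 := by
    exact_mod_cast hcardN
  have hb0 : (0:ℝ) ≤ ((Finset.Icc (i - m) (min i n)).card : ℝ) / (((n:ℝ)+1) * ((m:ℝ)+1)) := by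
    positivity
  have hinv0 : (0:ℝ) ≤ ((n:ℝ)+1)⁻¹ := by positivity
  have hble : ((Finset.Icc (i - m) (min i n)).card : ℝ) / (((n:ℝ)+1) * ((m:ℝ)+1))
      ≤ ((n:ℝ)+1)⁻¹ := by
    rw [div_le_iff₀ (by positivity)]
    have h : ((n:ℝ)+1)⁻¹ * (((n:ℝ)+1) * ((m:ℝ)+1)) = (m:ℝ)+1 := by field_simp
    linarith
  unfold gAux
  split_ifs with h
  · exact abs_le.mpr ⟨by linarith, by linarith⟩
  · exact abs_le.mpr ⟨by linarith, by linarith⟩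

lemma gAux_eq_zero (n m i : ℕ) (h1 : m ≤ i) (h2 : i ≤ n ∨ n + m < i) : gAux n m i = 0 := by
  unfold gAux
  rcases h2 with h2 | h2
  · have hmin : min i n = i := min_eq_left h2
    have hcard : (Finset.Icc (i - m) (min i n)).card = m + 1 := by
      rw [hmin, Nat.card_Icc]; omega
    rw [if_pos h2, hcard]
    have hc : ((m + 1 : ℕ) : ℝ) = (m:ℝ) + 1 := by push_cast; ring
    rw [hc]
    have h : ((n:ℝ)+1)⁻¹ - ((m:ℝ)+1) / (((n:ℝ)+1) * ((m:ℝ)+1)) = 0 := by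
      field_simp
      ring
    rw [h, abs_zero]
  · have h : ¬ i ≤ n := by omega
    have hmin : min i n = n := min_eq_right (by omega)
    have hcard : (Finset.Icc (i - m) (min i n)).card = 0 := by
      rw [hmin, Nat.card_Icc]; omega
    rw [if_neg h, hcard]
    norm_num

/-- The total variation distance between the distribution of components
`P_n^η` and the distribution of components-of-components `Q_{n,m}^η` is `O(m/n)`. -/
theorem components_of_components_tv_bound :
    ∃ C > (0 : ℝ), ∀ (η : Measure ℝ), IsProbabilityMeasure η → η (Set.Ico 0 1) = 1 →
      ∀ n m : ℕ, 1 ≤ n →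
      ∑' p : ℕ × ℕ, |compDist η n p - compCompDist η n m p| ≤ C * m / n := by
  refine ⟨2, by norm_num, ?_⟩
  intro η hprob hsupp n m hn
  -- pointwise factorization
  have hpt : ∀ p : ℕ × ℕ, |compDist η n p - compCompDist η n m p|
      = gAux n m p.1 * (η (dcell p.1 p.2)).toReal := by
    intro p
    have h : compDist η n p - compCompDist η n m p
        = ((if p.1 ≤ n then ((n:ℝ)+1)⁻¹ else 0) -
            ((Finset.Icc (p.1 - m) (min p.1 n)).card : ℝ) / (((n:ℝ)+1) * ((m:ℝ)+1)))
          * (η (dcell p.1 p.2)).toReal := by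
      unfold compDist compCompDist
      split_ifs <;> ring
    rw [h, abs_mul, abs_of_nonneg ENNReal.toReal_nonneg]
    rfl
  -- cells at a fixed level have total mass at most 1
  have hcellsum : ∀ (i : ℕ) (K : Finset ℕ), ∑ k ∈ K, (η (dcell i k)).toReal ≤ 1 := by
    intro i K
    have hdisj : ∀ k l : ℕ, k < l → Disjoint (dcell i k) (dcell i l) := by
      intro k l hkl
      refine Set.disjoint_left.mpr fun x hx hx' => ?_
      have hpow : (0:ℝ) < 2 ^ i := by positivity
      have h1 : ((k:ℝ) + 1) ≤ (l:ℝ) := by exact_mod_cast hkl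
      have h2 : ((k:ℝ) + 1) / 2 ^ i ≤ (l:ℝ) / 2 ^ i := by gcongr
      have hx2 : x < ((k:ℝ) + 1) / 2 ^ i := hx.2
      have hx1 : (l:ℝ) / 2 ^ i ≤ x := hx'.1
      linarith
    have hpd : (↑K : Set ℕ).PairwiseDisjoint (fun k => dcell i k) := by
      intro k _ l _ hne
      rcases hne.lt_or_gt with h | h
      · exact hdisj k l h
      · exact (hdisj l k h).symm
    have h1 : ∑ k ∈ K, η (dcell i k) = η (⋃ k ∈ K, dcell i k) :=
      (measure_biUnion_finset hpd fun k _ => by unfold dcell; exact measurableSet_Ico).symm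
    calc ∑ k ∈ K, (η (dcell i k)).toReal
        = (∑ k ∈ K, η (dcell i k)).toReal :=
          (ENNReal.toReal_sum fun k _ => measure_ne_top η _).symm
      _ ≤ (1 : ENNReal).toReal := by
          refine ENNReal.toReal_mono ENNReal.one_ne_top ?_
          rw [h1]; exact prob_le_one
      _ = 1 := by simp
  have hn1 : (0:ℝ) < (n:ℝ) + 1 := by positivity
  have hnpos : (0:ℝ) < (n:ℝ) := by exact_mod_cast hn
  -- finite partial sums are bounded
  have key : ∀ s : Finset (ℕ × ℕ),
      ∑ p ∈ s, |compDist η n p - compCompDist η n m p| ≤ 2 * m / n := by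
    intro s
    set S : Finset ℕ := Finset.range m ∪ Finset.Ioc n (n + m) with hS
    set K : Finset ℕ := s.image Prod.snd with hK
    have hzero : ∀ p ∈ s, p ∉ s ∩ S ×ˢ K → |compDist η n p - compCompDist η n m p| = 0 := by
      intro p hp hpn
      have h1 : p.1 ∉ S := by
        intro h
        exact hpn (Finset.mem_inter.mpr ⟨hp,
          Finset.mem_product.mpr ⟨h, Finset.mem_image_of_mem _ hp⟩⟩)
      have hm : m ≤ p.1 ∧ (p.1 ≤ n ∨ n + m < p.1) := by
        simp only [hS, Finset.mem_union, Finset.mem_range, Finset.mem_Ioc, not_or] at h1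
        omega
      rw [hpt p, gAux_eq_zero n m p.1 hm.1 hm.2, zero_mul]
    have hScard : (S.card : ℝ) ≤ 2 * m := by
      have h1 : S.card ≤ m + m := by
        refine (Finset.card_union_le _ _).trans ?_
        rw [Finset.card_range, Nat.card_Ioc]; omega
      have : (S.card : ℝ) ≤ ((m + m : ℕ) : ℝ) := by exact_mod_cast h1
      push_cast at this ⊢; linarith
    calc ∑ p ∈ s, |compDist η n p - compCompDist η n m p|
        = ∑ p ∈ s ∩ S ×ˢ K, |compDist η n p - compCompDist η n m p| :=
          (Finset.sum_subset (Finset.inter_subset_left) hzero).symm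
      _ ≤ ∑ p ∈ S ×ˢ K, |compDist η n p - compCompDist η n m p| :=
          Finset.sum_le_sum_of_subset_of_nonneg (Finset.inter_subset_right)
            (fun p _ _ => abs_nonneg _)
      _ = ∑ i ∈ S, ∑ k ∈ K, gAux n m i * (η (dcell i k)).toReal := by
          rw [Finset.sum_product]
          exact Finset.sum_congr rfl fun i _ => Finset.sum_congr rfl fun k _ => hpt (i, k)
      _ = ∑ i ∈ S, gAux n m i * ∑ k ∈ K, (η (dcell i k)).toReal := by
          exact Finset.sum_congr rfl fun i _ => (Finset.mul_sum _ _ _).symm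
      _ ≤ ∑ i ∈ S, ((n:ℝ)+1)⁻¹ := by
          refine Finset.sum_le_sum fun i _ => ?_
          calc gAux n m i * ∑ k ∈ K, (η (dcell i k)).toReal
              ≤ gAux n m i * 1 :=
                mul_le_mul_of_nonneg_left (hcellsum i K) (gAux_nonneg n m i)
            _ = gAux n m i := mul_one _
            _ ≤ ((n:ℝ)+1)⁻¹ := gAux_le n m i
      _ = (S.card : ℝ) * ((n:ℝ)+1)⁻¹ := by rw [Finset.sum_const, nsmul_eq_mul]
      _ ≤ 2 * m * ((n:ℝ)+1)⁻¹ := by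
          exact mul_le_mul_of_nonneg_right hScard (by positivity)
      _ = 2 * m / ((n:ℝ)+1) := by ring
      _ ≤ 2 * m / n := by
          rw [div_le_div_iff₀ hn1 hnpos]
          have hm0 : (0:ℝ) ≤ (m:ℝ) := Nat.cast_nonneg m
          nlinarith
  exact tsum_le_of_sum_le' (by positivity) key
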